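/- Let a, b be positive integers with b > a > 2 and e = lcm(a,b). For every c ≥ e − a there exists a tame polynomial automorphism of C^3 with multidegree (a, b, c). Specifically, writing c = e + (k−1)a + m with k ≥ 0 and 0 < m < a, the composition F = (x, y, z + x^k(x^{e/a} − y^{e/b})) ∘ (x + z^a + z^m, y + z^b, z) is such an automorphism; and if a | c with c ≥ e − a, then (x, y, z + x^{c/a}) ∘ (x + z^a, y + z^b, z) works. -/

import Mathlib

open MvPolynomial Finset

/-- A polynomial map `ℂ^n → ℂ^n`, given by its coordinate polynomials. -/
abbrev PolyMap (n : ℕ) := Fin n → MvPolynomial (Fin n) ℂ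

/-- Composition of polynomial maps: `(compPM F G) = F ∘ G`. -/
noncomputable def compPM {n : ℕ} (F G : PolyMap n) : PolyMap n :=
  fun i => aeval G (F i)

/-- The identity polynomial map. -/
noncomputable def idPM (n : ℕ) : PolyMap n := fun i => X i

/-- `F` is a polynomial automorphism: it has a polynomial inverse. -/
def IsPolyAut {n : ℕ} (F : PolyMap n) : Prop :=
  ∃ G : PolyMap n, compPM F G = idPM n ∧ compPM G F = idPM n

/-- `F` is elementary: it changes one coordinate `j` by adding a polynomial
not involving the variable `j`. -/
def IsElementaryPM {n : ℕ} (F : PolyMap n) : Prop :=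
  ∃ (j : Fin n) (g : MvPolynomial (Fin n) ℂ),
    degreeOf j g = 0 ∧ F j = X j + g ∧ ∀ i, i ≠ j → F i = X i

/-- `F` is a linear (degree ≤ 1) automorphism. -/
def IsLinearPM {n : ℕ} (F : PolyMap n) : Prop :=
  IsPolyAut F ∧ ∀ i, (F i).totalDegree ≤ 1

/-- `F` is tame: a composition of linear and elementary automorphisms. -/
inductive IsTamePM : {n : ℕ} → PolyMap n → Prop
  | lin {n} (F : PolyMap n) : IsLinearPM F → IsTamePM F
  | elem {n} (F : PolyMap n) : IsElementaryPM F → IsTamePM F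
  | comp {n} (F G : PolyMap n) : IsTamePM F → IsTamePM G → IsTamePM (compPM F G)

/-- The multidegree of a polynomial map of `ℂ^3`. -/
noncomputable def mdeg3 (F : PolyMap 3) : ℕ × ℕ × ℕ :=
  ((F 0).totalDegree, (F 1).totalDegree, (F 2).totalDegree)

lemma aeval_fixed {n : ℕ} (j : Fin n) (g : MvPolynomial (Fin n) ℂ) (hg : degreeOf j g = 0)
    (G : PolyMap n) (hG : ∀ i, i ≠ j → G i = X i) : aeval G g = g := by
  conv_lhs => rw [g.as_sum]
  rw [map_sum]
  conv_rhs => rw [g.as_sum]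
  refine Finset.sum_congr rfl fun d hd => ?_
  rw [aeval_monomial, monomial_eq]
  congr 1
  refine Finsupp.prod_congr fun i hi => ?_
  show G i ^ d i = X i ^ d i
  by_cases hij : i = j
  · subst hij
    rw [degreeOf_eq_sup] at hg
    have h1 : d i ≤ g.support.sup fun m => m i := Finset.le_sup (f := fun m => m i) hd
    have h2 : d i ≠ 0 := Finsupp.mem_support_iff.mp hi
    omega
  · rw [hG i hij]

lemma elem_isPolyAut {n : ℕ} {F : PolyMap n} (h : IsElementaryPM F) : IsPolyAut F := by
  obtain ⟨j, g, hg, hFj, hFi⟩ := h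
  refine ⟨fun i => if i = j then X j - g else X i, ?_, ?_⟩ <;> funext i <;>
    simp only [compPM, idPM]
  · by_cases hij : i = j
    · subst hij
      rw [hFj, map_add, aeval_X, if_pos rfl,
        aeval_fixed i g hg _ (fun i' hi' => by simp [hi'])]
      ring
    · rw [hFi i hij, aeval_X, if_neg hij]
  · by_cases hij : i = j
    · subst hij
      rw [if_pos rfl, map_sub, aeval_X, hFj,
        aeval_fixed i g hg _ (fun i' hi' => hFi i' hi')]
      ring
    · rw [if_neg hij, aeval_X, hFi i hij]

lemma compPM_assoc {n : ℕ} (F G H : PolyMap n) :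
    compPM (compPM F G) H = compPM F (compPM G H) := by
  funext i
  simp only [compPM]
  rw [← AlgHom.comp_apply, comp_aeval]
  rfl

lemma compPM_id {n : ℕ} (F : PolyMap n) : compPM F (idPM n) = F := by
  funext i; exact aeval_X_left_apply (F i)

lemma id_compPM {n : ℕ} (F : PolyMap n) : compPM (idPM n) F = F := by
  funext i; simp [compPM, idPM]

lemma comp_isPolyAut {n : ℕ} {F G : PolyMap n} (hF : IsPolyAut F) (hG : IsPolyAut G) :
    IsPolyAut (compPM F G) := by
  obtain ⟨F', hF1, hF2⟩ := hF
  obtain ⟨G', hG1, hG2⟩ := hG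
  refine ⟨compPM G' F', ?_, ?_⟩
  · rw [compPM_assoc, ← compPM_assoc G, hG1, id_compPM, hF1]
  · rw [compPM_assoc, ← compPM_assoc F', hF2, id_compPM, hG2]

lemma tame_isPolyAut {n : ℕ} {F : PolyMap n} (h : IsTamePM F) : IsPolyAut F := by
  induction h with
  | lin F h => exact h.1
  | elem F h => exact elem_isPolyAut h
  | comp F G _ _ ihF ihG => exact comp_isPolyAut ihF ihG

lemma natDegree_aeval_le {N : ℕ} (f : Fin N → Polynomial ℂ) (hf : ∀ i, (f i).natDegree ≤ 1)
    (p : MvPolynomial (Fin N) ℂ) : (aeval f p).natDegree ≤ p.totalDegree := by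
  conv_lhs => rw [p.as_sum]
  rw [map_sum]
  apply Polynomial.natDegree_sum_le_of_forall_le
  intro d hd
  rw [aeval_monomial]
  refine le_trans (Polynomial.natDegree_mul_le) ?_
  have h1 : (algebraMap ℂ (Polynomial ℂ) (coeff d p)).natDegree = 0 :=
    Polynomial.natDegree_C _
  rw [h1, zero_add]
  refine le_trans ?_ (le_totalDegree hd)
  refine le_trans (Polynomial.natDegree_prod_le _ _) ?_
  rw [Finsupp.sum]
  refine Finset.sum_le_sum fun i _ => ?_
  exact le_trans (Polynomial.natDegree_pow_le) (by
    calc d i * (f i).natDegree ≤ d i * 1 := Nat.mul_le_mul_left _ (hf i)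
    _ = d i := Nat.mul_one _)

noncomputable def phi3 : MvPolynomial (Fin 3) ℂ →ₐ[ℂ] Polynomial ℂ :=
  aeval ![0, 0, Polynomial.X]

lemma le_totalDegree_of_phi {p : MvPolynomial (Fin 3) ℂ} {t : ℕ}
    (h : (phi3 p).coeff t ≠ 0) : t ≤ p.totalDegree := by
  refine le_trans (Polynomial.le_natDegree_of_ne_zero h) ?_
  apply natDegree_aeval_le
  intro i
  fin_cases i <;> simp

lemma exp_ne {a m K i : ℕ} (hma : m < a) (hi : i ≤ K) (hne : i ≠ K - 1) (hK : 1 ≤ K) :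
    a * i + m * (K - i) ≠ a * (K - 1) + m := by
  obtain ⟨K', rfl⟩ : ∃ K', K = K' + 1 := ⟨K - 1, by omega⟩
  simp only [Nat.add_sub_cancel] at hne ⊢
  rcases lt_or_gt_of_ne hne with h | h
  · intro hEq
    obtain ⟨j, rfl⟩ : ∃ j, K' = i + j + 1 := ⟨K' - i - 1, by omega⟩
    have hj2 : i + j + 1 + 1 - i = j + 2 := by omega
    rw [hj2] at hEq
    nlinarith
  · have hi' : i = K' + 1 := by omega
    subst hi'
    rw [Nat.sub_self]
    nlinarith

lemma coeff_pow_key {a m : ℕ} (hma : m < a) (K : ℕ) (hK : 1 ≤ K) :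
    ((Polynomial.X ^ a + Polynomial.X ^ m : Polynomial ℂ) ^ K).coeff (a * (K - 1) + m)
      = (K : ℂ) := by
  rw [add_pow, Polynomial.finset_sum_coeff]
  rw [Finset.sum_eq_single (K - 1)]
  · have h1 : K - 1 ≤ K := Nat.sub_le _ _
    rw [← pow_mul, ← pow_mul, ← pow_add, ← Polynomial.C_eq_natCast, Polynomial.coeff_mul_C,
      Polynomial.coeff_X_pow]
    have h2 : K - (K - 1) = 1 := by omega
    rw [h2]
    have h3 : K.choose (K - 1) = K := by
      have := Nat.choose_symm h1
      rw [h2, Nat.choose_one_right] at this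
      omega
    simp [h3]
  · intro i hi hne
    rw [← pow_mul, ← pow_mul, ← pow_add, ← Polynomial.C_eq_natCast, Polynomial.coeff_mul_C,
      Polynomial.coeff_X_pow]
    rw [if_neg, zero_mul]
    exact fun hEq => exp_ne hma (Finset.mem_range_succ_iff.mp hi) hne hK hEq.symm
  · intro h
    exact absurd (Finset.mem_range_succ_iff.mpr (Nat.sub_le _ _)) h

lemma term_deg_le {a m : ℕ} (nn i : ℕ) (hi : i < nn) (hm : m ≤ a) :
    a * i + m * (nn - i) ≤ a * (nn - 1) + m := by
  obtain ⟨j, rfl⟩ : ∃ j, nn = i + j + 1 := ⟨nn - i - 1, by omega⟩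
  have h1 : i + j + 1 - i = j + 1 := by omega
  have h2 : i + j + 1 - 1 = i + j := by omega
  rw [h1, h2]
  have := Nat.mul_le_mul_right j hm
  nlinarith

lemma sum_deg_le {p : MvPolynomial (Fin 3) ℂ} (j : Fin 3) (a m nn D : ℕ)
    (hm : p.totalDegree ≤ m) (hbound : ∀ i, i < nn → a * i + m * (nn - i) ≤ D) :
    (∑ i ∈ Finset.range nn, (X j ^ a) ^ i * p ^ (nn - i) * (nn.choose i : MvPolynomial (Fin 3) ℂ)).totalDegree ≤ D := by
  refine le_trans (totalDegree_finset_sum _ _) ?_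
  refine Finset.sup_le fun i hi => ?_
  rw [Finset.mem_range] at hi
  refine le_trans (totalDegree_mul _ _) ?_
  have hc : ((nn.choose i : ℕ) : MvPolynomial (Fin 3) ℂ).totalDegree = 0 := by
    rw [← C_eq_coe_nat, totalDegree_C]
  rw [hc, add_zero]
  refine le_trans (totalDegree_mul _ _) (le_trans ?_ (hbound i hi))
  have h1 : ((X j ^ a : MvPolynomial (Fin 3) ℂ) ^ i).totalDegree = a * i := by
    rw [← pow_mul, totalDegree_X_pow]
  rw [h1]
  refine Nat.add_le_add_left ?_ _
  refine le_trans (totalDegree_pow _ _) ?_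
  calc (nn - i) * p.totalDegree ≤ (nn - i) * m := Nat.mul_le_mul_left _ hm
  _ = m * (nn - i) := Nat.mul_comm _ _

lemma R_decomp (a b m e nn n' : ℕ) (hae : a * nn = e) (hbe : b * n' = e) :
    (X 0 + X 2 ^ a + X 2 ^ m : MvPolynomial (Fin 3) ℂ) ^ nn - (X 1 + X 2 ^ b) ^ n' =
    (∑ i ∈ Finset.range nn, (X 2 ^ a) ^ i * (X 0 + X 2 ^ m) ^ (nn - i) * (nn.choose i : MvPolynomial (Fin 3) ℂ))
    - (∑ i ∈ Finset.range n', (X 2 ^ b) ^ i * (X 1 : MvPolynomial (Fin 3) ℂ) ^ (n' - i) * (n'.choose i : MvPolynomial (Fin 3) ℂ)) := by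
  have hP : (X 0 + X 2 ^ a + X 2 ^ m : MvPolynomial (Fin 3) ℂ) = X 2 ^ a + (X 0 + X 2 ^ m) := by
    ring
  have hQ : (X 1 + X 2 ^ b : MvPolynomial (Fin 3) ℂ) = X 2 ^ b + X 1 := by ring
  rw [hP, hQ, add_pow, add_pow, Finset.sum_range_succ, Finset.sum_range_succ]
  rw [Nat.sub_self, Nat.sub_self, pow_zero, pow_zero, Nat.choose_self, Nat.choose_self]
  rw [← pow_mul, ← pow_mul, hae, hbe]
  push_cast
  ring

lemma R_deg_le (a b m e nn n' : ℕ) (hm : 0 < m) (hma : m < a) (hab : a < b)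
    (hae : a * nn = e) (hbe : b * n' = e) (hnn : 1 ≤ nn) (hn' : 1 ≤ n') :
    ((X 0 + X 2 ^ a + X 2 ^ m : MvPolynomial (Fin 3) ℂ) ^ nn - (X 1 + X 2 ^ b) ^ n').totalDegree
      ≤ a * (nn - 1) + m := by
  rw [R_decomp a b m e nn n' hae hbe]
  refine le_trans (totalDegree_sub _ _) (max_le ?_ ?_)
  · refine sum_deg_le 2 a m nn _ ?_ ?_
    · refine le_trans (totalDegree_add _ _) (max_le ?_ ?_)
      · rw [totalDegree_X]; omega
      · rw [totalDegree_X_pow]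
    · exact fun i hi => term_deg_le nn i hi (le_of_lt hma)
  · refine le_trans (sum_deg_le 2 b 1 n' (b * (n' - 1) + 1) ?_ ?_) ?_
    · rw [totalDegree_X]
    · exact fun i hi => term_deg_le n' i hi (by omega)
    · -- b * (n' - 1) + 1 ≤ a * (nn - 1) + m
      obtain ⟨j, rfl⟩ : ∃ j, n' = j + 1 := ⟨n' - 1, by omega⟩
      obtain ⟨i, rfl⟩ : ∃ i, nn = i + 1 := ⟨nn - 1, by omega⟩
      simp only [Nat.add_sub_cancel]
      have h1 : b * j + b = e := by rw [← hbe]; ring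
      have h2 : a * i + a = e := by rw [← hae]; ring
      linarith

lemma elem_X2pow_add (q r : ℕ) :
    IsElementaryPM (![X 0 + (X 2 ^ q + X 2 ^ r), X 1, X 2] : PolyMap 3) := by
  refine ⟨0, X 2 ^ q + X 2 ^ r, ?_, rfl, ?_⟩
  · have h1 : degreeOf 0 (X 2 ^ q + X 2 ^ r : MvPolynomial (Fin 3) ℂ) ≤ 0 := by
      refine le_trans (degreeOf_add_le _ _ _) ?_
      simp only [max_le_iff]
      constructor <;> refine le_trans (degreeOf_pow_le _ _ _) ?_ <;>
        rw [degreeOf_X] <;> simp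
    omega
  · intro i hi
    fin_cases i <;> simp_all

lemma elem_X2pow_add' (q : ℕ) :
    IsElementaryPM (![X 0, X 1 + X 2 ^ q, X 2] : PolyMap 3) := by
  refine ⟨1, X 2 ^ q, ?_, rfl, ?_⟩
  · have h1 : degreeOf 1 (X 2 ^ q : MvPolynomial (Fin 3) ℂ) ≤ 0 := by
      refine le_trans (degreeOf_pow_le _ _ _) ?_
      rw [degreeOf_X]; simp
    omega
  · intro i hi
    fin_cases i <;> simp_all

lemma elem_third (g : MvPolynomial (Fin 3) ℂ) (hg : degreeOf 2 g = 0) :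
    IsElementaryPM (![X 0, X 1, X 2 + g] : PolyMap 3) := by
  refine ⟨2, g, hg, rfl, ?_⟩
  intro i hi
  fin_cases i <;> simp_all

lemma deg2_g {k K : ℕ} (p q : MvPolynomial (Fin 3) ℂ) (hp : degreeOf 2 p = 0) (hq : degreeOf 2 q = 0) :
    degreeOf 2 (p ^ k * (p ^ K - q) : MvPolynomial (Fin 3) ℂ) = 0 := by
  have h1 : degreeOf 2 (p ^ k * (p ^ K - q) : MvPolynomial (Fin 3) ℂ) ≤ 0 := by
    refine le_trans (degreeOf_mul_le _ _ _) ?_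
    have h2 := degreeOf_pow_le 2 p k
    have h3 := degreeOf_pow_le 2 p K
    have h4 := degreeOf_sub_le 2 (p ^ K) q
    rw [hp, Nat.mul_zero] at h2 h3
    rw [hq] at h4
    omega
  omega

lemma deg2_X0 : degreeOf 2 (X 0 : MvPolynomial (Fin 3) ℂ) = 0 := by
  rw [degreeOf_X]; simp

lemma deg2_X1pow (K : ℕ) : degreeOf 2 (X 1 ^ K : MvPolynomial (Fin 3) ℂ) = 0 := by
  have := degreeOf_pow_le 2 (X 1 : MvPolynomial (Fin 3) ℂ) K
  rw [degreeOf_X] at this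
  simp at this
  omega

lemma deg2_X0pow (K : ℕ) : degreeOf 2 (X 0 ^ K : MvPolynomial (Fin 3) ℂ) = 0 := by
  have := degreeOf_pow_le 2 (X 0 : MvPolynomial (Fin 3) ℂ) K
  rw [degreeOf_X] at this
  simp at this
  omega

lemma elem_X2pow0 (q : ℕ) :
    IsElementaryPM (![X 0 + X 2 ^ q, X 1, X 2] : PolyMap 3) := by
  refine ⟨0, X 2 ^ q, ?_, rfl, ?_⟩
  · have h1 : degreeOf 0 (X 2 ^ q : MvPolynomial (Fin 3) ℂ) ≤ 0 := by
      refine le_trans (degreeOf_pow_le _ _ _) ?_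
      rw [degreeOf_X]; simp
    omega
  · intro i hi
    fin_cases i <;> simp_all

lemma deg_coord0 (q : ℕ) (hq : 1 ≤ q) :
    (X 0 + X 2 ^ q : MvPolynomial (Fin 3) ℂ).totalDegree = q := by
  refine le_antisymm (le_trans (totalDegree_add _ _) ?_) ?_
  · rw [totalDegree_X, totalDegree_X_pow]; omega
  · refine le_totalDegree_of_phi (t := q) ?_
    have h : phi3 (X 0 + X 2 ^ q) = Polynomial.X ^ q := by
      simp [phi3]
    rw [h, Polynomial.coeff_X_pow, if_pos rfl]
    exact one_ne_zero

lemma deg_coord1 (q : ℕ) (hq : 1 ≤ q) :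
    (X 1 + X 2 ^ q : MvPolynomial (Fin 3) ℂ).totalDegree = q := by
  refine le_antisymm (le_trans (totalDegree_add _ _) ?_) ?_
  · rw [totalDegree_X, totalDegree_X_pow]; omega
  · refine le_totalDegree_of_phi (t := q) ?_
    have h : phi3 (X 1 + X 2 ^ q) = Polynomial.X ^ q := by
      simp [phi3]
    rw [h, Polynomial.coeff_X_pow, if_pos rfl]
    exact one_ne_zero

lemma deg_coord0' (q m : ℕ) (hm : 1 ≤ m) (hmq : m < q) :
    (X 0 + X 2 ^ q + X 2 ^ m : MvPolynomial (Fin 3) ℂ).totalDegree = q := by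
  refine le_antisymm (le_trans (totalDegree_add _ _) ?_) ?_
  · refine max_le (le_trans (totalDegree_add _ _) ?_) ?_
    · rw [totalDegree_X, totalDegree_X_pow]; omega
    · rw [totalDegree_X_pow]; omega
  · refine le_totalDegree_of_phi (t := q) ?_
    have h : phi3 (X 0 + X 2 ^ q + X 2 ^ m) = Polynomial.X ^ q + Polynomial.X ^ m := by
      simp [phi3]
    rw [h, Polynomial.coeff_add, Polynomial.coeff_X_pow, Polynomial.coeff_X_pow,
      if_pos rfl, if_neg (by omega)]
    simp

lemma case3 (a b c e : ℕ) (ha : 2 < a) (hab : a < b) (he : e = Nat.lcm a b)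
    (hc : e ≤ c + a) (hdvd : a ∣ c) :
    IsTamePM (compPM (![X 0, X 1, X 2 + X 0 ^ (c / a)] : PolyMap 3)
        ![X 0 + X 2 ^ a, X 1 + X 2 ^ b, X 2]) ∧
    IsPolyAut (compPM (![X 0, X 1, X 2 + X 0 ^ (c / a)] : PolyMap 3)
        ![X 0 + X 2 ^ a, X 1 + X 2 ^ b, X 2]) ∧
    mdeg3 (compPM (![X 0, X 1, X 2 + X 0 ^ (c / a)] : PolyMap 3)
        ![X 0 + X 2 ^ a, X 1 + X 2 ^ b, X 2]) = (a, b, c) := by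
  have hb0 : 0 < b := by omega
  have he0 : 0 < e := he ▸ Nat.pos_of_ne_zero (Nat.lcm_ne_zero (by omega) (by omega))
  have hbe : b ≤ e := Nat.le_of_dvd he0 (he ▸ Nat.dvd_lcm_right a b)
  have hc0 : 0 < c := by omega
  have hac : a ≤ c := Nat.le_of_dvd hc0 hdvd
  have hca : a * (c / a) = c := Nat.mul_div_cancel' hdvd
  -- tameness
  have htame : IsTamePM (compPM (![X 0, X 1, X 2 + X 0 ^ (c / a)] : PolyMap 3)
      ![X 0 + X 2 ^ a, X 1 + X 2 ^ b, X 2]) := by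
    have hB : (![X 0 + X 2 ^ a, X 1 + X 2 ^ b, X 2] : PolyMap 3) =
        compPM ![X 0 + X 2 ^ a, X 1, X 2] ![X 0, X 1 + X 2 ^ b, X 2] := by
      funext i
      fin_cases i <;> simp [compPM]
    rw [hB]
    refine IsTamePM.comp _ _ (IsTamePM.elem _ ?_) (IsTamePM.comp _ _
      (IsTamePM.elem _ (elem_X2pow0 a)) (IsTamePM.elem _ (elem_X2pow_add' b)))
    refine elem_third _ ?_
    exact deg2_X0pow (c / a)
  have haut := tame_isPolyAut htame
  refine ⟨htame, haut, ?_⟩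
  -- explicit form
  have hF : compPM (![X 0, X 1, X 2 + X 0 ^ (c / a)] : PolyMap 3)
      ![X 0 + X 2 ^ a, X 1 + X 2 ^ b, X 2] =
      ![X 0 + X 2 ^ a, X 1 + X 2 ^ b, X 2 + (X 0 + X 2 ^ a) ^ (c / a)] := by
    funext i
    fin_cases i <;> simp [compPM]
  rw [hF]
  have hd0 : (X 0 + X 2 ^ a : MvPolynomial (Fin 3) ℂ).totalDegree = a :=
    deg_coord0 a (by omega)
  have hd2 : (X 2 + (X 0 + X 2 ^ a) ^ (c / a) : MvPolynomial (Fin 3) ℂ).totalDegree = c := by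
    refine le_antisymm (le_trans (totalDegree_add _ _) ?_) ?_
    · refine max_le (by rw [totalDegree_X]; omega) ?_
      refine le_trans (totalDegree_pow _ _) ?_
      rw [hd0, Nat.mul_comm, hca]
    · refine le_totalDegree_of_phi (t := c) ?_
      have h : phi3 (X 2 + (X 0 + X 2 ^ a) ^ (c / a)) =
          Polynomial.X + Polynomial.X ^ c := by
        have h2 : phi3 (X 2 + (X 0 + X 2 ^ a) ^ (c / a)) =
            Polynomial.X + (Polynomial.X ^ a) ^ (c / a) := by
          simp [phi3]
        rw [h2, ← pow_mul, hca]
      rw [h, Polynomial.coeff_add, Polynomial.coeff_X, Polynomial.coeff_X_pow,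
        if_neg (by omega), if_pos rfl]
      simp
  show ((X 0 + X 2 ^ a : MvPolynomial (Fin 3) ℂ).totalDegree,
    (X 1 + X 2 ^ b : MvPolynomial (Fin 3) ℂ).totalDegree,
    (X 2 + (X 0 + X 2 ^ a) ^ (c / a) : MvPolynomial (Fin 3) ℂ).totalDegree) = (a, b, c)
  rw [hd0, hd2, deg_coord1 b (by omega)]

lemma coeff_main (a m e k n n' b : ℕ) (hm : 0 < m) (hma : m < a)
    (hae : a * n = e) (hbe : b * n' = e) (hn : 2 ≤ n) :
    ((Polynomial.X + (Polynomial.X ^ a + Polynomial.X ^ m) ^ k *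
      ((Polynomial.X ^ a + Polynomial.X ^ m) ^ n - (Polynomial.X ^ b) ^ n') : Polynomial ℂ)).coeff
      (a * (k + n - 1) + m) = (n : ℂ) := by
  have ha2 : 2 ≤ a := by omega
  have hc1 : a * (k + n - 1) + m ≠ 1 := by
    have h := Nat.le_mul_of_pos_right a (show 0 < k + n - 1 by omega)
    omega
  rw [mul_sub, ← pow_add, ← pow_mul, hbe]
  rw [Polynomial.coeff_add, Polynomial.coeff_sub, Polynomial.coeff_X, if_neg (by omega)]
  have h1 : ((Polynomial.X ^ a + Polynomial.X ^ m : Polynomial ℂ) ^ (k + n)).coeff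
      (a * (k + n - 1) + m) = ((k + n : ℕ) : ℂ) :=
    coeff_pow_key hma (k + n) (by omega)
  have h2 : ((Polynomial.X ^ a + Polynomial.X ^ m : Polynomial ℂ) ^ k * Polynomial.X ^ e).coeff
      (a * (k + n - 1) + m) = (k : ℂ) := by
    rw [Polynomial.coeff_mul_X_pow']
    rcases Nat.eq_zero_or_pos k with hk | hk
    · subst hk
      obtain ⟨n₀, rfl⟩ : ∃ n₀, n = n₀ + 1 := ⟨n - 1, by omega⟩
      have h3 : a * (n₀ + 1) = a * n₀ + a := by ring
      rw [if_neg (by simp only [Nat.zero_add, Nat.add_sub_cancel]; rw [← hae]; linarith)]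
      norm_num
    · obtain ⟨k₀, rfl⟩ : ∃ k₀, k = k₀ + 1 := ⟨k - 1, by omega⟩
      have h3 : a * (k₀ + 1 + n - 1) = a * k₀ + e := by
        rw [show k₀ + 1 + n - 1 = k₀ + n from by omega, Nat.mul_add, hae]
      have hec : e ≤ a * (k₀ + 1 + n - 1) + m := by omega
      rw [if_pos hec]
      have hce : a * (k₀ + 1 + n - 1) + m - e = a * (k₀ + 1 - 1) + m := by
        rw [h3, show k₀ + 1 - 1 = k₀ from rfl]; omega
      rw [hce]
      exact coeff_pow_key hma (k₀ + 1) (by omega)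
  rw [h1, h2]
  push_cast
  ring

lemma case2 (a b c e k m : ℕ) (ha : 2 < a) (hab : a < b) (he : e = Nat.lcm a b)
    (hm : 0 < m) (hma : m < a) (hckm : c + a = e + k * a + m) :
    IsTamePM (compPM (![X 0, X 1, X 2 + X 0 ^ k * (X 0 ^ (e / a) - X 1 ^ (e / b))] : PolyMap 3)
        ![X 0 + X 2 ^ a + X 2 ^ m, X 1 + X 2 ^ b, X 2]) ∧
    IsPolyAut (compPM (![X 0, X 1, X 2 + X 0 ^ k * (X 0 ^ (e / a) - X 1 ^ (e / b))] : PolyMap 3)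
        ![X 0 + X 2 ^ a + X 2 ^ m, X 1 + X 2 ^ b, X 2]) ∧
    mdeg3 (compPM (![X 0, X 1, X 2 + X 0 ^ k * (X 0 ^ (e / a) - X 1 ^ (e / b))] : PolyMap 3)
        ![X 0 + X 2 ^ a + X 2 ^ m, X 1 + X 2 ^ b, X 2]) = (a, b, c) := by
  have he0 : 0 < e := he ▸ Nat.pos_of_ne_zero (Nat.lcm_ne_zero (by omega) (by omega))
  have hadvd : a ∣ e := he ▸ Nat.dvd_lcm_left a b
  have hbdvd : b ∣ e := he ▸ Nat.dvd_lcm_right a b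
  have hbe' : b ≤ e := Nat.le_of_dvd he0 hbdvd
  have hae : a * (e / a) = e := Nat.mul_div_cancel' hadvd
  have hbe : b * (e / b) = e := Nat.mul_div_cancel' hbdvd
  set n := e / a with hn
  set n' := e / b with hn'
  obtain ⟨n₀, hn₀⟩ : ∃ n₀, n = n₀ + 1 := by
    refine ⟨n - 1, ?_⟩
    rcases Nat.eq_zero_or_pos n with h | h
    · rw [h, Nat.mul_zero] at hae; omega
    · omega
  have hee : a * n₀ + a = e := by rw [← hae, hn₀]; ring
  have hn2 : 2 ≤ n := by
    rcases Nat.lt_or_ge n 2 with h | h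
    · have : n = 1 := by omega
      rw [this, Nat.mul_one] at hae
      omega
    · exact h
  have hn'1 : 1 ≤ n' := by
    rcases Nat.eq_zero_or_pos n' with h | h
    · rw [h, Nat.mul_zero] at hbe; omega
    · exact h
  have hka : k * a = a * k := Nat.mul_comm k a
  have hcval : c = a * (k + n - 1) + m := by
    have h4 : a * (k + n - 1) = a * k + a * n₀ := by
      rw [hn₀, show k + (n₀ + 1) - 1 = k + n₀ from by omega, Nat.mul_add]
    omega
  have htame : IsTamePM (compPM (![X 0, X 1, X 2 + X 0 ^ k * (X 0 ^ n - X 1 ^ n')] : PolyMap 3)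
      ![X 0 + X 2 ^ a + X 2 ^ m, X 1 + X 2 ^ b, X 2]) := by
    have hB : (![X 0 + X 2 ^ a + X 2 ^ m, X 1 + X 2 ^ b, X 2] : PolyMap 3) =
        compPM ![X 0 + (X 2 ^ a + X 2 ^ m), X 1, X 2] ![X 0, X 1 + X 2 ^ b, X 2] := by
      funext i
      fin_cases i <;> simp [compPM] <;> ring
    rw [hB]
    refine IsTamePM.comp _ _ (IsTamePM.elem _ ?_) (IsTamePM.comp _ _
      (IsTamePM.elem _ (elem_X2pow_add a m)) (IsTamePM.elem _ (elem_X2pow_add' b)))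
    refine elem_third _ (deg2_g (X 0) (X 1 ^ n') deg2_X0 (deg2_X1pow n'))
  have haut := tame_isPolyAut htame
  refine ⟨htame, haut, ?_⟩
  have hF : compPM (![X 0, X 1, X 2 + X 0 ^ k * (X 0 ^ n - X 1 ^ n')] : PolyMap 3)
      ![X 0 + X 2 ^ a + X 2 ^ m, X 1 + X 2 ^ b, X 2] =
      ![X 0 + X 2 ^ a + X 2 ^ m, X 1 + X 2 ^ b,
        X 2 + (X 0 + X 2 ^ a + X 2 ^ m) ^ k *
          ((X 0 + X 2 ^ a + X 2 ^ m) ^ n - (X 1 + X 2 ^ b) ^ n')] := by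
    funext i
    fin_cases i <;> simp [compPM]
  rw [hF]
  have hd0 : (X 0 + X 2 ^ a + X 2 ^ m : MvPolynomial (Fin 3) ℂ).totalDegree = a :=
    deg_coord0' a m (by omega) hma
  have hd2 : (X 2 + (X 0 + X 2 ^ a + X 2 ^ m) ^ k *
      ((X 0 + X 2 ^ a + X 2 ^ m) ^ n - (X 1 + X 2 ^ b) ^ n') :
      MvPolynomial (Fin 3) ℂ).totalDegree = c := by
    refine le_antisymm (le_trans (totalDegree_add _ _) (max_le ?_ ?_)) ?_
    · rw [totalDegree_X]; omega
    · have hp := totalDegree_pow (X 0 + X 2 ^ a + X 2 ^ m : MvPolynomial (Fin 3) ℂ) k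
      rw [hd0] at hp
      have hr := R_deg_le a b m e n n' hm hma hab hae hbe (by omega) hn'1
      refine le_trans (totalDegree_mul _ _) (le_trans (add_le_add hp hr) ?_)
      have h4 : a * (k + n - 1) = a * k + a * n₀ := by
        rw [hn₀, show k + (n₀ + 1) - 1 = k + n₀ from by omega, Nat.mul_add]
      have h5 : a * (n - 1) = a * n₀ := by rw [hn₀]; simp
      rw [hcval, h4, h5]
      omega
    · refine le_totalDegree_of_phi (t := c) ?_
      have hphi : phi3 (X 2 + (X 0 + X 2 ^ a + X 2 ^ m) ^ k *
          ((X 0 + X 2 ^ a + X 2 ^ m) ^ n - (X 1 + X 2 ^ b) ^ n')) =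
          Polynomial.X + (Polynomial.X ^ a + Polynomial.X ^ m) ^ k *
            ((Polynomial.X ^ a + Polynomial.X ^ m) ^ n - (Polynomial.X ^ b) ^ n') := by
        simp [phi3]
      rw [hphi, hcval, coeff_main a m e k n n' b hm hma hae hbe hn2]
      exact Nat.cast_ne_zero.mpr (by omega)
  show ((X 0 + X 2 ^ a + X 2 ^ m : MvPolynomial (Fin 3) ℂ).totalDegree,
    (X 1 + X 2 ^ b : MvPolynomial (Fin 3) ℂ).totalDegree,
    (X 2 + (X 0 + X 2 ^ a + X 2 ^ m) ^ k *
      ((X 0 + X 2 ^ a + X 2 ^ m) ^ n - (X 1 + X 2 ^ b) ^ n') :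
      MvPolynomial (Fin 3) ℂ).totalDegree) = (a, b, c)
  rw [hd0, hd2, deg_coord1 b (by omega)]

theorem stmt8 (a b : ℕ) (ha : 2 < a) (hab : a < b) (e : ℕ)
    (he : e = Nat.lcm a b) (c : ℕ) (hc : e ≤ c + a) :
    (∃ F : PolyMap 3, IsTamePM F ∧ IsPolyAut F ∧ mdeg3 F = (a, b, c)) ∧
    (∀ k m : ℕ, 0 < m → m < a → c + a = e + k * a + m →
      ∀ F : PolyMap 3,
        F = compPM ![X 0, X 1, X 2 + X 0 ^ k * (X 0 ^ (e / a) - X 1 ^ (e / b))]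
                   ![X 0 + X 2 ^ a + X 2 ^ m, X 1 + X 2 ^ b, X 2] →
        IsTamePM F ∧ IsPolyAut F ∧ mdeg3 F = (a, b, c)) ∧
    (a ∣ c →
      ∀ F : PolyMap 3,
        F = compPM ![X 0, X 1, X 2 + X 0 ^ (c / a)]
                   ![X 0 + X 2 ^ a, X 1 + X 2 ^ b, X 2] →
        IsTamePM F ∧ IsPolyAut F ∧ mdeg3 F = (a, b, c)) := by
  constructor
  · by_cases hdvd : a ∣ c
    · exact ⟨_, case3 a b c e ha hab he hc hdvd⟩
    · set k := (c + a - e) / a with hk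
      set m := (c + a - e) % a with hm
      have hdm : a * k + m = c + a - e := Nat.div_add_mod (c + a - e) a
      have hadvd : a ∣ e := he ▸ Nat.dvd_lcm_left a b
      have hma : m < a := Nat.mod_lt _ (by omega)
      have hm0 : 0 < m := by
        rcases Nat.eq_zero_or_pos m with h | h
        · exfalso
          apply hdvd
          have h1 : a ∣ c + a - e := Nat.dvd_of_mod_eq_zero (by omega)
          have h2 : a ∣ c + a := by
            have := Nat.dvd_add h1 hadvd
            rwa [Nat.sub_add_cancel hc] at this
          have h3 : a ∣ c + a - a := Nat.dvd_sub h2 (dvd_refl a)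
          rwa [Nat.add_sub_cancel] at h3
        · exact h
      have hckm : c + a = e + k * a + m := by
        have hka : a * k = k * a := Nat.mul_comm a k
        omega
      exact ⟨_, case2 a b c e k m ha hab he hm0 hma hckm⟩
  constructor
  · intro k m hm0 hma hckm F hF
    rw [hF]
    exact case2 a b c e k m ha hab he hm0 hma hckm
  · intro hdvd F hF
    rw [hF]
    exact case3 a b c e ha hab he hc hdvd
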